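/- For 2 ≤ p < ∞, the Banach–Mazur distance between the k×k matrix spaces C^k_∞ (operator norm) and C^k_p (Schatten p-norm) equals k^{1/p}. -/

import Mathlib

open scoped ComplexOrder

/-- The singular values of a complex `k × k` matrix: square roots of eigenvalues of `xᴴx`. -/
noncomputable def singVals {k : ℕ} (x : Matrix (Fin k) (Fin k) ℂ) : Fin k → ℝ :=
  fun i => Real.sqrt ((Matrix.posSemidef_conjTranspose_mul_self x).1.eigenvalues i)

/-- The Schatten `p`-norm `‖x‖_p = (Tr |x|^p)^{1/p}` of a `k × k` complex matrix. -/
noncomputable def schattenNorm {k : ℕ} (p : ℝ) (x : Matrix (Fin k) (Fin k) ℂ) : ℝ :=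
  (∑ i : Fin k, singVals x i ^ p) ^ (1 / p)
/-- The operator norm of a linear map between two spaces carrying given norm functions. -/
noncomputable def opNormBetween {V W : Type*} [AddCommGroup V] [Module ℂ V]
    [AddCommGroup W] [Module ℂ W] (N₁ : V → ℝ) (N₂ : W → ℝ) (f : V →ₗ[ℂ] W) : ℝ :=
  sInf {c : ℝ | 0 ≤ c ∧ ∀ v, N₂ (f v) ≤ c * N₁ v}

/-- The Banach–Mazur distance between two norms on the same space. -/
noncomputable def BMdist {V : Type*} [AddCommGroup V] [Module ℂ V] (N₁ N₂ : V → ℝ) : ℝ :=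
  sInf {t : ℝ | ∃ Γ : V ≃ₗ[ℂ] V,
    t = opNormBetween N₁ N₂ Γ.toLinearMap * opNormBetween N₂ N₁ Γ.symm.toLinearMap}

/-- The `C*`-operator norm of a `k × k` complex matrix (acting on `ℓ²ₖ`). -/
noncomputable def matrixOpNorm {k : ℕ} (x : Matrix (Fin k) (Fin k) ℂ) : ℝ :=
  ‖Matrix.toEuclideanCLM (𝕜 := ℂ) x‖

namespace BMaux

open Matrix
open scoped Matrix.Norms.L2Operator

variable {k : ℕ}

/-! ### Generic facts about `opNormBetween` -/

section opNB

variable {V W : Type*} [AddCommGroup V] [Module ℂ V] [AddCommGroup W] [Module ℂ W]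
  {N₁ : V → ℝ} {N₂ : W → ℝ} {f : V →ₗ[ℂ] W}

lemma opNB_nonneg : 0 ≤ opNormBetween N₁ N₂ f :=
  Real.sInf_nonneg fun _ hc => hc.1

lemma opNB_le {c : ℝ} (hc0 : 0 ≤ c) (hc : ∀ v, N₂ (f v) ≤ c * N₁ v) :
    opNormBetween N₁ N₂ f ≤ c :=
  csInf_le ⟨0, fun _ hd => hd.1⟩ ⟨hc0, hc⟩

lemma opNB_bound (hne : ∃ c : ℝ, 0 ≤ c ∧ ∀ v, N₂ (f v) ≤ c * N₁ v)
    (hN₁ : ∀ v, 0 ≤ N₁ v) (h0 : ∀ v, N₁ v = 0 → N₂ (f v) ≤ 0) (v : V) :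
    N₂ (f v) ≤ opNormBetween N₁ N₂ f * N₁ v := by
  rcases eq_or_lt_of_le (hN₁ v) with h | hpos
  · rw [← h, mul_zero]
    exact h0 v h.symm
  · have hle : N₂ (f v) / N₁ v ≤ opNormBetween N₁ N₂ f := by
      refine le_csInf hne ?_
      rintro c ⟨hc0, hc⟩
      rw [div_le_iff₀ hpos]
      exact hc v
    calc N₂ (f v) = (N₂ (f v) / N₁ v) * N₁ v := by field_simp
      _ ≤ opNormBetween N₁ N₂ f * N₁ v :=
        mul_le_mul_of_nonneg_right hle (le_of_lt hpos)

end opNB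

/-! ### Spectral facts -/

lemma singVals_nonneg (x : Matrix (Fin k) (Fin k) ℂ) (i : Fin k) : 0 ≤ singVals x i :=
  Real.sqrt_nonneg _

lemma norm_eq_matrixOpNorm (x : Matrix (Fin k) (Fin k) ℂ) : ‖x‖ = matrixOpNorm x := rfl

lemma qf (x : Matrix (Fin k) (Fin k) ℂ) (v : EuclideanSpace ℂ (Fin k)) :
    ‖Matrix.toEuclideanCLM (𝕜 := ℂ) x v‖ ^ 2
      = ∑ i, (Matrix.posSemidef_conjTranspose_mul_self x).1.eigenvalues i *
          ‖(Matrix.posSemidef_conjTranspose_mul_self x).1.eigenvectorBasis.repr v i‖ ^ 2 := by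
  set hA := (Matrix.posSemidef_conjTranspose_mul_self x).1 with hhA
  set B := hA.eigenvectorBasis with hB
  set T := Matrix.toEuclideanCLM (𝕜 := ℂ) x with hT
  set S := Matrix.toEuclideanCLM (𝕜 := ℂ) (xᴴ * x) with hS
  have hSB : ∀ i, S (B i) = (hA.eigenvalues i : ℂ) • B i := by
    intro i
    have h2 := hA.mulVec_eigenvectorBasis i
    apply (WithLp.equiv 2 ((Fin k) → ℂ)).injective
    simp only [hS, WithLp.equiv_apply, Matrix.ofLp_toEuclideanCLM]
    rw [h2, WithLp.ofLp_smul, RCLike.real_smul_eq_coe_smul (K := ℂ)]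
    rfl
  have hTT : S v = ContinuousLinearMap.adjoint T (T v) := by
    rw [hS, ← Matrix.star_eq_conjTranspose, _root_.map_mul, map_star,
      ContinuousLinearMap.star_eq_adjoint]
    rfl
  have h1 : ‖T v‖ ^ 2 = RCLike.re (inner (𝕜 := ℂ) v (S v)) := by
    rw [hTT, ContinuousLinearMap.adjoint_inner_right]
    exact (inner_self_eq_norm_sq _).symm
  rw [h1]
  have hv : S v = ∑ j, ((B.repr v j) * (hA.eigenvalues j : ℂ)) • B j := by
    conv_lhs => rw [← B.sum_repr v, map_sum]
    refine Finset.sum_congr rfl fun j _ => ?_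
    rw [_root_.map_smul, hSB j, smul_smul]
  rw [hv, inner_sum]
  simp only [inner_smul_right]
  rw [map_sum]
  refine Finset.sum_congr rfl fun j _ => ?_
  have hrepr : inner (𝕜 := ℂ) v (B j) = (starRingEnd ℂ) (B.repr v j) := by
    rw [← inner_conj_symm, B.repr_apply_apply]
  rw [hrepr]
  set c := B.repr v j
  set e := hA.eigenvalues j
  calc (c * (e:ℂ) * (starRingEnd ℂ) c).re
      = ((e : ℂ) * (c * (starRingEnd ℂ) c)).re := by ring_nf
    _ = ((e:ℂ) * ((Complex.normSq c : ℝ) : ℂ)).re := by rw [Complex.mul_conj]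
    _ = e * Complex.normSq c := by rw [← Complex.ofReal_mul, Complex.ofReal_re]
    _ = e * ‖c‖ ^ 2 := by rw [← Complex.sq_norm]

lemma parseval (x : Matrix (Fin k) (Fin k) ℂ) (v : EuclideanSpace ℂ (Fin k)) :
    ∑ i, ‖(Matrix.posSemidef_conjTranspose_mul_self x).1.eigenvectorBasis.repr v i‖ ^ 2
      = ‖v‖ ^ 2 := by
  set B := (Matrix.posSemidef_conjTranspose_mul_self x).1.eigenvectorBasis
  have h1 : ‖B.repr v‖ = ‖v‖ := B.repr.norm_map v
  rw [← h1, EuclideanSpace.norm_eq]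
  rw [Real.sq_sqrt (Finset.sum_nonneg fun i _ => sq_nonneg _)]

lemma singVals_le_opNorm (x : Matrix (Fin k) (Fin k) ℂ) (i : Fin k) :
    singVals x i ≤ matrixOpNorm x := by
  set hA := (Matrix.posSemidef_conjTranspose_mul_self x).1
  set B := hA.eigenvectorBasis with hB
  set T := Matrix.toEuclideanCLM (𝕜 := ℂ) x
  have h1 := qf x (B i)
  have hrs : B.repr (B i) = EuclideanSpace.single i (1:ℂ) := B.repr_self i
  have h2 : ‖T (B i)‖ ^ 2 = hA.eigenvalues i := by
    rw [h1, hrs]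
    rw [Fintype.sum_eq_single i]
    · simp [EuclideanSpace.single_apply]
    · intro j hj
      simp [EuclideanSpace.single_apply, hj]
  have hBi : ‖B i‖ = 1 := B.orthonormal.1 i
  have h3 : ‖T (B i)‖ ≤ matrixOpNorm x := by
    calc ‖T (B i)‖ ≤ ‖T‖ * ‖B i‖ := T.le_opNorm _
    _ = matrixOpNorm x := by rw [hBi, mul_one]; rfl
  have h4 : singVals x i = ‖T (B i)‖ := by
    rw [show singVals x i = Real.sqrt (hA.eigenvalues i) from rfl, ← h2]
    rw [Real.sqrt_sq (norm_nonneg _)]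
  rw [h4]; exact h3

lemma rpow_rpow_inv' {s : ℝ} (hs : 0 ≤ s) {p : ℝ} (hp : 0 < p) : (s ^ p) ^ (1/p) = s := by
  rw [← Real.rpow_mul hs, mul_one_div_cancel (ne_of_gt hp), Real.rpow_one]

lemma schatten_nonneg {p : ℝ} (x : Matrix (Fin k) (Fin k) ℂ) : 0 ≤ schattenNorm p x :=
  Real.rpow_nonneg (Finset.sum_nonneg fun i _ =>
    Real.rpow_nonneg (singVals_nonneg x i) p) _

lemma opNorm_le_schatten {p : ℝ} (hp : 0 < p) (x : Matrix (Fin k) (Fin k) ℂ) :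
    matrixOpNorm x ≤ schattenNorm p x := by
  set hA := (Matrix.posSemidef_conjTranspose_mul_self x).1
  set M := schattenNorm p x with hM
  have hM0 : 0 ≤ M := schatten_nonneg x
  have hsv : ∀ i, singVals x i ≤ M := by
    intro i
    have h1 : singVals x i ^ p ≤ ∑ j, singVals x j ^ p :=
      Finset.single_le_sum (fun j _ => Real.rpow_nonneg (singVals_nonneg x j) p)
        (Finset.mem_univ i)
    have h2 := Real.rpow_le_rpow (Real.rpow_nonneg (singVals_nonneg x i) p) h1
      (le_of_lt (one_div_pos.mpr hp))
    rwa [rpow_rpow_inv' (singVals_nonneg x i) hp] at h2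
  have hkey : ∀ i, hA.eigenvalues i ≤ M ^ 2 := by
    intro i
    rw [← Real.sq_sqrt ((Matrix.posSemidef_conjTranspose_mul_self x).eigenvalues_nonneg i)]
    exact pow_le_pow_left₀ (singVals_nonneg x i) (hsv i) 2
  refine ContinuousLinearMap.opNorm_le_bound _ hM0 fun v => ?_
  have h4 : ‖Matrix.toEuclideanCLM (𝕜 := ℂ) x v‖ ^ 2 ≤ (M * ‖v‖) ^ 2 := by
    rw [qf x v, mul_pow]
    calc ∑ i, hA.eigenvalues i * ‖hA.eigenvectorBasis.repr v i‖ ^ 2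
        ≤ ∑ i, M ^ 2 * ‖hA.eigenvectorBasis.repr v i‖ ^ 2 := by
          refine Finset.sum_le_sum fun i _ => ?_
          exact mul_le_mul_of_nonneg_right (hkey i) (sq_nonneg _)
      _ = M ^ 2 * ‖v‖ ^ 2 := by rw [← Finset.mul_sum, parseval x v]
  exact le_of_pow_le_pow_left₀ two_ne_zero (mul_nonneg hM0 (norm_nonneg _)) h4

lemma schatten_le_opNorm {p : ℝ} (hp : 0 < p) (x : Matrix (Fin k) (Fin k) ℂ) :
    schattenNorm p x ≤ (k : ℝ) ^ (1 / p) * matrixOpNorm x := by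
  have hop : 0 ≤ matrixOpNorm x := norm_nonneg _
  have h1 : ∑ i, singVals x i ^ p ≤ (k : ℝ) * matrixOpNorm x ^ p := by
    calc ∑ i, singVals x i ^ p ≤ ∑ _i : Fin k, matrixOpNorm x ^ p :=
          Finset.sum_le_sum fun i _ =>
            Real.rpow_le_rpow (singVals_nonneg x i) (singVals_le_opNorm x i) (le_of_lt hp)
      _ = (k : ℝ) * matrixOpNorm x ^ p := by simp [mul_comm]
  have h2 := Real.rpow_le_rpow (Finset.sum_nonneg fun i _ =>
      Real.rpow_nonneg (singVals_nonneg x i) p) h1 (le_of_lt (one_div_pos.mpr hp))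
  calc schattenNorm p x ≤ ((k : ℝ) * matrixOpNorm x ^ p) ^ (1/p) := h2
    _ = (k : ℝ) ^ (1/p) * matrixOpNorm x := by
        rw [Real.mul_rpow (Nat.cast_nonneg k) (Real.rpow_nonneg hop p),
          rpow_rpow_inv' hop hp]

lemma sum_singVals_sq (x : Matrix (Fin k) (Fin k) ℂ) :
    ∑ i, singVals x i ^ (2:ℕ) = ∑ j, ∑ i, ‖x i j‖ ^ (2:ℕ) := by
  set hA := (Matrix.posSemidef_conjTranspose_mul_self x).1 with hhA
  have hsq : ∀ i, singVals x i ^ (2:ℕ) = hA.eigenvalues i := fun i =>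
    Real.sq_sqrt ((Matrix.posSemidef_conjTranspose_mul_self x).eigenvalues_nonneg i)
  have htr : (xᴴ * x).trace = ∑ i, (hA.eigenvalues i : ℂ) := by
    conv_lhs => rw [hA.spectral_theorem]
    rw [Unitary.conjStarAlgAut_apply, Matrix.trace_mul_cycle]
    rw [show (star (hA.eigenvectorUnitary : Matrix (Fin k) (Fin k) ℂ)) *
        (hA.eigenvectorUnitary : Matrix (Fin k) (Fin k) ℂ) = 1 from
      Unitary.coe_star_mul_self hA.eigenvectorUnitary]
    rw [one_mul, Matrix.trace_diagonal]
    rfl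
  have hre : ((xᴴ * x).trace).re = ∑ j, ∑ i, ‖x i j‖ ^ (2:ℕ) := by
    rw [Matrix.trace]
    rw [Complex.re_sum]
    refine Finset.sum_congr rfl fun j _ => ?_
    rw [Matrix.diag_apply, Matrix.mul_apply, Complex.re_sum]
    refine Finset.sum_congr rfl fun i _ => ?_
    rw [Matrix.conjTranspose_apply]
    rw [show (star (x i j)) * x i j = ((Complex.normSq (x i j) : ℝ) : ℂ) by
      rw [show star (x i j) = (starRingEnd ℂ) (x i j) from rfl, mul_comm, Complex.mul_conj]]
    rw [Complex.ofReal_re, ← Complex.sq_norm]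
  calc ∑ i, singVals x i ^ (2:ℕ) = ∑ i, hA.eigenvalues i := by
        exact Finset.sum_congr rfl fun i _ => hsq i
    _ = ((xᴴ * x).trace).re := by
        rw [htr, Complex.re_sum]; exact Finset.sum_congr rfl fun i _ => (Complex.ofReal_re _).symm
    _ = _ := hre

/-! ### Frobenius norm squared -/

noncomputable def Fsq (z : Matrix (Fin k) (Fin k) ℂ) : ℝ := ∑ j, ∑ i, ‖z i j‖ ^ (2:ℕ)

lemma Fsq_nonneg (z : Matrix (Fin k) (Fin k) ℂ) : 0 ≤ Fsq z :=
  Finset.sum_nonneg fun j _ => Finset.sum_nonneg fun i _ => pow_nonneg (norm_nonneg _) 2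

lemma Fsq_eq_sum_sq (z : Matrix (Fin k) (Fin k) ℂ) :
    Fsq z = ∑ i, singVals z i ^ (2:ℕ) := (sum_singVals_sq z).symm

lemma schattenNorm_zero {p : ℝ} (hp : 0 < p) :
    schattenNorm p (0 : Matrix (Fin k) (Fin k) ℂ) = 0 := by
  have h := sum_singVals_sq (0 : Matrix (Fin k) (Fin k) ℂ)
  simp only [Matrix.zero_apply, norm_zero] at h
  have h0 : ∑ i, singVals (0 : Matrix (Fin k) (Fin k) ℂ) i ^ (2:ℕ) = 0 := by
    rw [h]; simp
  have hz : ∀ i, singVals (0 : Matrix (Fin k) (Fin k) ℂ) i = 0 := by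
    intro i
    have := (Finset.sum_eq_zero_iff_of_nonneg (fun i _ => sq_nonneg _)).mp h0 i
      (Finset.mem_univ i)
    exact pow_eq_zero_iff (two_ne_zero) |>.mp this
  unfold schattenNorm
  rw [Finset.sum_eq_zero (fun i _ => by rw [hz i]; exact Real.zero_rpow (ne_of_gt hp))]
  exact Real.zero_rpow (ne_of_gt (one_div_pos.mpr hp))

lemma opNorm_nonneg' (x : Matrix (Fin k) (Fin k) ℂ) : 0 ≤ matrixOpNorm x := norm_nonneg _

lemma opNorm_zero' : matrixOpNorm (0 : Matrix (Fin k) (Fin k) ℂ) = 0 := by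
  rw [← norm_eq_matrixOpNorm]
  exact norm_zero

lemma opNorm_zero_iff (x : Matrix (Fin k) (Fin k) ℂ) (h : matrixOpNorm x = 0) : x = 0 :=
  norm_eq_zero.mp (by rw [norm_eq_matrixOpNorm, h])

/-! ### Rademacher signs -/

noncomputable def sgn (b : Bool) : ℂ := if b then 1 else -1

lemma sgn_mul_self (b : Bool) : sgn b * sgn b = 1 := by cases b <;> simp [sgn]
lemma conj_sgn (b : Bool) : (starRingEnd ℂ) (sgn b) = sgn b := by cases b <;> simp [sgn]

lemma sgn_orth {i j : Fin k} (h : i ≠ j) :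
    ∑ ε : Fin k → Bool, sgn (ε i) * sgn (ε j) = 0 := by
  have hinv : Function.Involutive (fun ε : Fin k → Bool => Function.update ε i (!(ε i))) := by
    intro ε; funext a
    rcases eq_or_ne a i with rfl | ha
    · simp [Function.update]
    · simp [Function.update, ha]
  set e := Function.Involutive.toPerm _ hinv with he
  have hsum := Equiv.sum_comp e (fun ε : Fin k → Bool => sgn (ε i) * sgn (ε j))
  have hneg : ∀ ε : Fin k → Bool,
      sgn ((e ε) i) * sgn ((e ε) j) = -(sgn (ε i) * sgn (ε j)) := by
    intro ε
    have h1 : (e ε) i = !(ε i) := by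
      simp [he, Function.Involutive.toPerm, Function.update]
    have h2 : (e ε) j = ε j := by
      simp [he, Function.Involutive.toPerm]
      exact Function.update_of_ne (Ne.symm h) _ _
    rw [h1, h2]
    cases ε i <;> cases ε j <;> simp [sgn]
  simp only [hneg] at hsum
  rw [Finset.sum_neg_distrib] at hsum
  linear_combination (-(1/2) : ℂ) * hsum

lemma radem (c : Fin k → ℂ) :
    ∑ ε : Fin k → Bool, ‖∑ i, sgn (ε i) * c i‖ ^ (2:ℕ)
      = 2 ^ k * ∑ i, ‖c i‖ ^ (2:ℕ) := by
  have key : ∑ ε : Fin k → Bool,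
      (∑ i, sgn (ε i) * c i) * (starRingEnd ℂ) (∑ i, sgn (ε i) * c i)
      = (2 ^ k : ℂ) * ∑ i, (c i * (starRingEnd ℂ) (c i)) := by
    have expand : ∀ ε : Fin k → Bool,
        (∑ i, sgn (ε i) * c i) * (starRingEnd ℂ) (∑ i, sgn (ε i) * c i)
        = ∑ i, ∑ j, (sgn (ε i) * sgn (ε j)) * (c i * (starRingEnd ℂ) (c j)) := by
      intro ε
      rw [map_sum, Finset.sum_mul_sum]
      refine Finset.sum_congr rfl fun i _ => Finset.sum_congr rfl fun j _ => ?_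
      rw [_root_.map_mul, conj_sgn]
      ring
    calc ∑ ε : Fin k → Bool, (∑ i, sgn (ε i) * c i) * (starRingEnd ℂ) (∑ i, sgn (ε i) * c i)
        = ∑ ε : Fin k → Bool, ∑ i, ∑ j, (sgn (ε i) * sgn (ε j)) * (c i * (starRingEnd ℂ) (c j)) :=
          Finset.sum_congr rfl fun ε _ => expand ε
      _ = ∑ i, ∑ j, ∑ ε : Fin k → Bool, (sgn (ε i) * sgn (ε j)) * (c i * (starRingEnd ℂ) (c j)) := by
          rw [Finset.sum_comm]
          exact Finset.sum_congr rfl fun i _ => Finset.sum_comm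
      _ = ∑ i, ∑ j, (∑ ε : Fin k → Bool, sgn (ε i) * sgn (ε j)) * (c i * (starRingEnd ℂ) (c j)) := by
          refine Finset.sum_congr rfl fun i _ => Finset.sum_congr rfl fun j _ => ?_
          rw [Finset.sum_mul]
      _ = ∑ i : Fin k, (2 ^ k : ℂ) * (c i * (starRingEnd ℂ) (c i)) := by
          refine Finset.sum_congr rfl fun i _ => ?_
          rw [Fintype.sum_eq_single i]
          · have h2k : ∑ ε : Fin k → Bool, sgn (ε i) * sgn (ε i) = (2 ^ k : ℂ) := by
              rw [Finset.sum_congr rfl fun ε _ => sgn_mul_self (ε i)]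
              simp [Finset.card_univ]
            rw [h2k]
          · intro j hj
            rw [sgn_orth (Ne.symm hj), zero_mul]
      _ = (2 ^ k : ℂ) * ∑ i, (c i * (starRingEnd ℂ) (c i)) := by rw [Finset.mul_sum]
  have lhs_re : ∀ w : ℂ, ‖w‖ ^ (2:ℕ) = (w * (starRingEnd ℂ) w).re := by
    intro w
    rw [Complex.mul_conj, Complex.ofReal_re, Complex.normSq_eq_norm_sq]
  calc ∑ ε : Fin k → Bool, ‖∑ i, sgn (ε i) * c i‖ ^ (2:ℕ)
      = (∑ ε : Fin k → Bool,
          (∑ i, sgn (ε i) * c i) * (starRingEnd ℂ) (∑ i, sgn (ε i) * c i)).re := by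
        rw [Complex.re_sum]
        exact Finset.sum_congr rfl fun ε _ => lhs_re _
    _ = ((2 ^ k : ℂ) * ∑ i, (c i * (starRingEnd ℂ) (c i))).re := by rw [key]
    _ = 2 ^ k * ∑ i, ‖c i‖ ^ (2:ℕ) := by
        rw [show ((2:ℂ) ^ k) = (((2:ℝ) ^ k : ℝ) : ℂ) by push_cast; ring]
        rw [Complex.re_ofReal_mul]
        rw [Complex.re_sum]
        congr 1
        exact Finset.sum_congr rfl fun i _ => (lhs_re _).symm

lemma sum_Fsq (y : Fin k → Matrix (Fin k) (Fin k) ℂ) :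
    ∑ ε : Fin k → Bool, Fsq (∑ i, sgn (ε i) • y i) = 2 ^ k * ∑ i, Fsq (y i) := by
  have entry : ∀ (ε : Fin k → Bool) (a b : Fin k),
      (∑ i, sgn (ε i) • y i) a b = ∑ i, sgn (ε i) * y i a b := by
    intro ε a b
    rw [Matrix.sum_apply]
    rfl
  calc ∑ ε : Fin k → Bool, Fsq (∑ i, sgn (ε i) • y i)
      = ∑ ε : Fin k → Bool, ∑ b, ∑ a, ‖∑ i, sgn (ε i) * y i a b‖ ^ (2:ℕ) := by
        refine Finset.sum_congr rfl fun ε _ => ?_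
        unfold Fsq
        exact Finset.sum_congr rfl fun b _ => Finset.sum_congr rfl fun a _ => by rw [entry]
    _ = ∑ b, ∑ a, ∑ ε : Fin k → Bool, ‖∑ i, sgn (ε i) * y i a b‖ ^ (2:ℕ) := by
        rw [Finset.sum_comm]
        exact Finset.sum_congr rfl fun b _ => Finset.sum_comm
    _ = ∑ b, ∑ a, 2 ^ k * ∑ i, ‖y i a b‖ ^ (2:ℕ) := by
        exact Finset.sum_congr rfl fun b _ => Finset.sum_congr rfl fun a _ =>
          radem (fun i => y i a b)
    _ = ∑ b, ∑ a, ∑ i, 2 ^ k * ‖y i a b‖ ^ (2:ℕ) := by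
        exact Finset.sum_congr rfl fun b _ => Finset.sum_congr rfl fun a _ =>
          Finset.mul_sum _ _ _
    _ = ∑ b, ∑ i, ∑ a, 2 ^ k * ‖y i a b‖ ^ (2:ℕ) := by
        exact Finset.sum_congr rfl fun b _ => Finset.sum_comm
    _ = ∑ i, ∑ b, ∑ a, 2 ^ k * ‖y i a b‖ ^ (2:ℕ) := Finset.sum_comm
    _ = 2 ^ k * ∑ i, Fsq (y i) := by
        rw [Finset.mul_sum]
        refine Finset.sum_congr rfl fun i _ => ?_
        unfold Fsq
        rw [Finset.mul_sum]
        exact Finset.sum_congr rfl fun b _ => (Finset.mul_sum _ _ _).symm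

/-! ### Special matrices -/

lemma opNorm_diag_sgn (hk : 1 ≤ k) (ε : Fin k → Bool) :
    matrixOpNorm (Matrix.diagonal (fun i => sgn (ε i)) : Matrix (Fin k) (Fin k) ℂ) ≤ 1 := by
  rw [← norm_eq_matrixOpNorm]
  set D : Matrix (Fin k) (Fin k) ℂ := Matrix.diagonal (fun i => sgn (ε i)) with hD
  have hstar : star D * D = 1 := by
    rw [hD, Matrix.star_eq_conjTranspose, Matrix.diagonal_conjTranspose]
    rw [Matrix.diagonal_mul_diagonal]
    ext a b
    rcases eq_or_ne a b with rfl | hab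
    · rw [Matrix.diagonal_apply_eq, Matrix.one_apply_eq, Pi.star_apply]
      cases ε a <;> simp [sgn]
    · rw [Matrix.diagonal_apply_ne _ hab, Matrix.one_apply_ne hab]
  haveI : Nonempty (Fin k) := ⟨⟨0, hk⟩⟩
  have hone : ‖(1 : Matrix (Fin k) (Fin k) ℂ)‖ = 1 := by
    rw [Matrix.cstar_norm_def, _root_.map_one]
    exact ContinuousLinearMap.norm_id
  have hsq : ‖D‖ * ‖D‖ = 1 := by
    rw [← CStarRing.norm_star_mul_self, hstar, hone]
  nlinarith [norm_nonneg D]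

lemma opNorm_stdBasis_ge (i : Fin k) :
    1 ≤ matrixOpNorm (Matrix.single i i (1:ℂ) : Matrix (Fin k) (Fin k) ℂ) := by
  set T := Matrix.toEuclideanCLM (𝕜 := ℂ) (Matrix.single i i (1:ℂ))
  have hv : T (EuclideanSpace.single i (1:ℂ)) = EuclideanSpace.single i (1:ℂ) := by
    show T (WithLp.toLp 2 (Pi.single i (1:ℂ))) = _
    rw [Matrix.toEuclideanCLM_toLp]
    congr 1
    rw [Matrix.mulVec_single]
    funext a
    rcases eq_or_ne a i with rfl | ha
    · simp [Matrix.single]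
    · simp [Matrix.single, ha, Ne.symm ha, Pi.single, Function.update]
  have h1 : ‖EuclideanSpace.single i (1:ℂ)‖ = 1 := by
    rw [EuclideanSpace.norm_single]; norm_num
  have hle := T.le_opNorm (EuclideanSpace.single i (1:ℂ))
  rw [hv, h1, mul_one] at hle
  exact hle

lemma diag_sgn_eq_sum (ε : Fin k → Bool) :
    (Matrix.diagonal (fun i => sgn (ε i)) : Matrix (Fin k) (Fin k) ℂ)
      = ∑ i, sgn (ε i) • Matrix.single i i (1:ℂ) := by
  ext a b
  rw [Matrix.sum_apply]
  rcases eq_or_ne a b with rfl | hab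
  · rw [Matrix.diagonal_apply_eq]
    rw [Fintype.sum_eq_single a]
    · simp [Matrix.single]
    · intro j hj
      simp only [Matrix.smul_apply, smul_eq_mul, Matrix.single, Matrix.of_apply]
      rw [if_neg (by tauto)]
      exact mul_zero _
  · rw [Matrix.diagonal_apply_ne _ hab]
    rw [Finset.sum_eq_zero]
    intro j _
    simp only [Matrix.smul_apply, smul_eq_mul, Matrix.single, Matrix.of_apply]
    rw [if_neg (by rintro ⟨rfl, rfl⟩; exact hab rfl)]
    exact mul_zero _

/-! ### Hölder-type inequalities between Schatten-p and Frobenius -/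

lemma sq_rpow_half {p : ℝ} (hp0 : 0 < p) :
    ∀ s : ℝ, 0 ≤ s → (s ^ (2:ℕ)) ^ (p/2) = s ^ p := by
  intro s hs
  rw [← Real.rpow_natCast s 2, ← Real.rpow_mul hs,
    show ((2:ℕ):ℝ) * (p / 2) = p by push_cast; ring]

lemma schatten_le_sqrt_Fsq {p : ℝ} (hp : 2 ≤ p) (z : Matrix (Fin k) (Fin k) ℂ) :
    schattenNorm p z ≤ Real.sqrt (Fsq z) := by
  have hp0 : (0:ℝ) < p := by linarith
  set q := p / 2 with hqdef
  have hq1 : 1 ≤ q := by rw [hqdef]; linarith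
  have hq0 : 0 < q := by linarith
  set t : Fin k → ℝ := fun i => singVals z i ^ (2:ℕ) with ht
  have ht0 : ∀ i, 0 ≤ t i := fun i => pow_nonneg (singVals_nonneg z i) 2
  set S := ∑ i, t i with hS
  have hS0 : 0 ≤ S := Finset.sum_nonneg fun i _ => ht0 i
  have htq : ∀ i, t i ^ q = singVals z i ^ p := fun i =>
    sq_rpow_half hp0 _ (singVals_nonneg z i)
  set P := ∑ i, singVals z i ^ p with hP
  have hP0 : 0 ≤ P := Finset.sum_nonneg fun i _ => Real.rpow_nonneg (singVals_nonneg z i) p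
  have claim : P ≤ S ^ q := by
    have hsplit : ∀ u : ℝ, 0 ≤ u → u ^ q = u * u ^ (q - 1) := by
      intro u hu
      nth_rewrite 2 [← Real.rpow_one u]
      rw [← Real.rpow_add' hu (by simpa using ne_of_gt hq0)]
      congr 1
      ring
    have hterm : ∀ i, singVals z i ^ p ≤ t i * S ^ (q - 1) := by
      intro i
      rw [← htq i, hsplit (t i) (ht0 i)]
      refine mul_le_mul_of_nonneg_left ?_ (ht0 i)
      exact Real.rpow_le_rpow (ht0 i)
        (Finset.single_le_sum (fun j _ => ht0 j) (Finset.mem_univ i)) (by linarith)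
    calc P ≤ ∑ i, t i * S ^ (q - 1) := Finset.sum_le_sum fun i _ => hterm i
      _ = S * S ^ (q - 1) := by rw [← Finset.sum_mul]
      _ = S ^ q := (hsplit S hS0).symm
  have h1 : schattenNorm p z ≤ (S ^ q) ^ (1/p) :=
    Real.rpow_le_rpow hP0 claim (by positivity)
  have h2 : (S ^ q) ^ (1/p) = Real.sqrt S := by
    rw [← Real.rpow_mul hS0, show q * (1/p) = 1/2 by rw [hqdef]; field_simp; try ring,
      ← Real.sqrt_eq_rpow]
  calc schattenNorm p z ≤ (S ^ q) ^ (1/p) := h1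
    _ = Real.sqrt S := h2
    _ = Real.sqrt (Fsq z) := by rw [hS, ht]; unfold Fsq; rw [← sum_singVals_sq z]

lemma Fsq_le_schatten {p : ℝ} (hk : 1 ≤ k) (hp : 2 ≤ p) (z : Matrix (Fin k) (Fin k) ℂ) :
    Fsq z ≤ (k:ℝ) ^ (1 - 2/p) * schattenNorm p z ^ (2:ℕ) := by
  have hp0 : (0:ℝ) < p := by linarith
  set q := p / 2 with hqdef
  have hq1 : 1 ≤ q := by rw [hqdef]; linarith
  have hq0 : 0 < q := by linarith
  have hk0 : (0:ℝ) < (k:ℝ) := by exact_mod_cast Nat.pos_of_ne_zero (by omega)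
  set t : Fin k → ℝ := fun i => singVals z i ^ (2:ℕ) with ht
  have ht0 : ∀ i, 0 ≤ t i := fun i => pow_nonneg (singVals_nonneg z i) 2
  set S := ∑ i, t i with hS
  have hS0 : 0 ≤ S := Finset.sum_nonneg fun i _ => ht0 i
  have htq : ∀ i, t i ^ q = singVals z i ^ p := fun i =>
    sq_rpow_half hp0 _ (singVals_nonneg z i)
  set P := ∑ i, singVals z i ^ p with hP
  have hP0 : 0 ≤ P := Finset.sum_nonneg fun i _ => Real.rpow_nonneg (singVals_nonneg z i) p
  have hSq : S ^ q ≤ (k:ℝ) ^ (q - 1) * P := by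
    have h := Real.rpow_sum_le_const_mul_sum_rpow_of_nonneg (s := Finset.univ) (f := t) hq1
      (fun i _ => ht0 i)
    rw [Finset.card_univ, Fintype.card_fin] at h
    calc S ^ q ≤ (k:ℝ) ^ (q - 1) * ∑ i, t i ^ q := h
      _ = (k:ℝ) ^ (q - 1) * P := by
          congr 1
          exact Finset.sum_congr rfl fun i _ => htq i
  have h1 : S ≤ ((k:ℝ) ^ (q - 1) * P) ^ (1/q) := by
    rw [← rpow_rpow_inv' hS0 hq0]
    exact Real.rpow_le_rpow (Real.rpow_nonneg hS0 q) hSq (by positivity)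
  have h2 : ((k:ℝ) ^ (q - 1) * P) ^ (1/q) = (k:ℝ) ^ (1 - 2/p) * schattenNorm p z ^ (2:ℕ) := by
    rw [Real.mul_rpow (Real.rpow_nonneg hk0.le _) hP0]
    rw [← Real.rpow_mul hk0.le]
    rw [show (q - 1) * (1/q) = 1 - 2/p by rw [hqdef]; field_simp; try ring]
    congr 1
    show P ^ (1/q) = (P ^ (1/p)) ^ (2:ℕ)
    rw [← Real.rpow_natCast (P ^ (1/p)) 2, ← Real.rpow_mul hP0]
    rw [show (1/p) * ((2:ℕ):ℝ) = 1/q by rw [hqdef]; push_cast; field_simp; try ring]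
  calc Fsq z = S := by rw [hS, ht]; unfold Fsq; rw [← sum_singVals_sq z]
    _ ≤ _ := h2 ▸ h1

/-! ### Boundedness (nonemptiness of the defining sets) -/

lemma exists_op_bound (f : Matrix (Fin k) (Fin k) ℂ →ₗ[ℂ] Matrix (Fin k) (Fin k) ℂ) :
    ∃ C : ℝ, 0 ≤ C ∧ ∀ v, matrixOpNorm (f v) ≤ C * matrixOpNorm v := by
  refine ⟨‖LinearMap.toContinuousLinearMap f‖, ContinuousLinearMap.opNorm_nonneg _, fun v => ?_⟩
  rw [← norm_eq_matrixOpNorm, ← norm_eq_matrixOpNorm]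
  exact (LinearMap.toContinuousLinearMap f).le_opNorm v

lemma nonempty_op_sch {p : ℝ} (hp : 0 < p)
    (f : Matrix (Fin k) (Fin k) ℂ →ₗ[ℂ] Matrix (Fin k) (Fin k) ℂ) :
    ∃ c : ℝ, 0 ≤ c ∧ ∀ v, schattenNorm p (f v) ≤ c * matrixOpNorm v := by
  obtain ⟨C, hC0, hC⟩ := exists_op_bound f
  refine ⟨(k:ℝ) ^ (1/p) * C, by positivity, fun v => ?_⟩
  calc schattenNorm p (f v) ≤ (k:ℝ) ^ (1/p) * matrixOpNorm (f v) := schatten_le_opNorm hp _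
    _ ≤ (k:ℝ) ^ (1/p) * (C * matrixOpNorm v) :=
        mul_le_mul_of_nonneg_left (hC v) (by positivity)
    _ = ((k:ℝ) ^ (1/p) * C) * matrixOpNorm v := by ring

lemma nonempty_sch_op {p : ℝ} (hp : 0 < p)
    (f : Matrix (Fin k) (Fin k) ℂ →ₗ[ℂ] Matrix (Fin k) (Fin k) ℂ) :
    ∃ c : ℝ, 0 ≤ c ∧ ∀ v, matrixOpNorm (f v) ≤ c * schattenNorm p v := by
  obtain ⟨C, hC0, hC⟩ := exists_op_bound f
  refine ⟨C, hC0, fun v => ?_⟩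
  calc matrixOpNorm (f v) ≤ C * matrixOpNorm v := hC v
    _ ≤ C * schattenNorm p v := mul_le_mul_of_nonneg_left (opNorm_le_schatten hp v) hC0

end BMaux

/-- for `2 ≤ p < ∞`, the Banach–Mazur distance between `C^k_∞`
(operator norm) and `C^k_p` (Schatten `p`-norm) equals `k^{1/p}`. -/
theorem banachMazur_schatten_infty_p (k : ℕ) (hk : 1 ≤ k) (p : ℝ) (hp : 2 ≤ p) :
    BMdist (matrixOpNorm (k := k)) (schattenNorm p) = (k : ℝ) ^ (1 / p) := by
  open BMaux in
  have hp0 : (0:ℝ) < p := by linarith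
  have hk0 : (0:ℝ) < (k:ℝ) := by exact_mod_cast Nat.pos_of_ne_zero (by omega)
  set V := Matrix (Fin k) (Fin k) ℂ
  set Nop : V → ℝ := matrixOpNorm (k := k)
  set Nsch : V → ℝ := schattenNorm p
  set Sset := {t : ℝ | ∃ Γ : V ≃ₗ[ℂ] V,
    t = opNormBetween Nop Nsch Γ.toLinearMap * opNormBetween Nsch Nop Γ.symm.toLinearMap}
  -- membership of the identity element
  have hid_mem : opNormBetween Nop Nsch (LinearEquiv.refl ℂ V).toLinearMap *
      opNormBetween Nsch Nop (LinearEquiv.refl ℂ V).symm.toLinearMap ∈ Sset :=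
    ⟨LinearEquiv.refl ℂ V, rfl⟩
  have hSne : Sset.Nonempty := ⟨_, hid_mem⟩
  have hlb : ∀ t ∈ Sset, (k:ℝ) ^ (1/p) ≤ t := by
    rintro t ⟨Γ, rfl⟩
    set f := Γ.toLinearMap
    set g := Γ.symm.toLinearMap
    set a := opNormBetween Nop Nsch f with hadef
    set b := opNormBetween Nsch Nop g with hbdef
    have ha0 : 0 ≤ a := BMaux.opNB_nonneg
    have hb0 : 0 ≤ b := BMaux.opNB_nonneg
    have Pa : ∀ v, Nsch (f v) ≤ a * Nop v := by
      refine BMaux.opNB_bound (BMaux.nonempty_op_sch hp0 f) (fun v => BMaux.opNorm_nonneg' v) ?_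
      intro v hv
      rw [show f v = Γ v from rfl, show v = 0 from BMaux.opNorm_zero_iff v hv, map_zero]
      rw [show Nsch (0 : V) = 0 from BMaux.schattenNorm_zero hp0]
    have Pb : ∀ w, Nop (g w) ≤ b * Nsch w := by
      refine BMaux.opNB_bound (BMaux.nonempty_sch_op hp0 g) (fun w => BMaux.schatten_nonneg w) ?_
      intro w hw
      have hw0 : w = 0 := by
        have h1 : Nop w ≤ 0 := hw ▸ BMaux.opNorm_le_schatten hp0 w
        exact BMaux.opNorm_zero_iff w (le_antisymm h1 (BMaux.opNorm_nonneg' w))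
      rw [hw0, map_zero]
      rw [show Nop (0 : V) = 0 from BMaux.opNorm_zero']
    set y : Fin k → V := fun i => Γ (Matrix.single i i (1:ℂ))
    -- bound from below : each y i has substantial Frobenius mass
    have bound1 : ∀ i, 1 ≤ b ^ (2:ℕ) * BMaux.Fsq (y i) := by
      intro i
      have h1 : (1:ℝ) ≤ Nop (g (y i)) := by
        have : g (y i) = Matrix.single i i (1:ℂ) := Γ.symm_apply_apply _
        rw [this]
        exact BMaux.opNorm_stdBasis_ge i
      have h2 : (1:ℝ) ≤ b * Real.sqrt (BMaux.Fsq (y i)) := by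
        calc (1:ℝ) ≤ Nop (g (y i)) := h1
          _ ≤ b * Nsch (y i) := Pb (y i)
          _ ≤ b * Real.sqrt (BMaux.Fsq (y i)) :=
            mul_le_mul_of_nonneg_left (BMaux.schatten_le_sqrt_Fsq hp (y i)) hb0
      have h3 : (1:ℝ) ≤ (b * Real.sqrt (BMaux.Fsq (y i))) ^ (2:ℕ) :=
        one_le_pow₀ h2
      calc (1:ℝ) ≤ (b * Real.sqrt (BMaux.Fsq (y i))) ^ (2:ℕ) := h3
        _ = b ^ (2:ℕ) * BMaux.Fsq (y i) := by
            rw [mul_pow, Real.sq_sqrt (BMaux.Fsq_nonneg (y i))]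
    -- bound from above : random sign combinations
    have bound2 : ∀ ε : Fin k → Bool,
        BMaux.Fsq (∑ i, BMaux.sgn (ε i) • y i) ≤ (k:ℝ) ^ (1 - 2/p) * a ^ (2:ℕ) := by
      intro ε
      have hz : (∑ i, BMaux.sgn (ε i) • y i)
          = f (Matrix.diagonal (fun i => BMaux.sgn (ε i))) := by
        rw [BMaux.diag_sgn_eq_sum, map_sum]
        exact Finset.sum_congr rfl fun i _ => (f.map_smul _ _).symm
      have hsch : Nsch (∑ i, BMaux.sgn (ε i) • y i) ≤ a := by
        rw [hz]
        calc Nsch (f _) ≤ a * Nop (Matrix.diagonal (fun i => BMaux.sgn (ε i))) := Pa _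
          _ ≤ a * 1 := mul_le_mul_of_nonneg_left (BMaux.opNorm_diag_sgn hk ε) ha0
          _ = a := mul_one a
      calc BMaux.Fsq (∑ i, BMaux.sgn (ε i) • y i)
          ≤ (k:ℝ) ^ (1 - 2/p) * Nsch (∑ i, BMaux.sgn (ε i) • y i) ^ (2:ℕ) :=
            BMaux.Fsq_le_schatten hk hp _
        _ ≤ (k:ℝ) ^ (1 - 2/p) * a ^ (2:ℕ) := by
            refine mul_le_mul_of_nonneg_left ?_ (by positivity)
            exact pow_le_pow_left₀ (BMaux.schatten_nonneg _) hsch 2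
    -- summing up
    have hsum : ∑ i, BMaux.Fsq (y i) ≤ (k:ℝ) ^ (1 - 2/p) * a ^ (2:ℕ) := by
      have h1 : (2:ℝ) ^ k * ∑ i, BMaux.Fsq (y i)
          ≤ (2:ℝ) ^ k * ((k:ℝ) ^ (1 - 2/p) * a ^ (2:ℕ)) := by
        rw [← BMaux.sum_Fsq y]
        calc ∑ ε : Fin k → Bool, BMaux.Fsq (∑ i, BMaux.sgn (ε i) • y i)
            ≤ ∑ _ε : Fin k → Bool, (k:ℝ) ^ (1 - 2/p) * a ^ (2:ℕ) :=
              Finset.sum_le_sum fun ε _ => bound2 ε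
          _ = (2:ℝ) ^ k * ((k:ℝ) ^ (1 - 2/p) * a ^ (2:ℕ)) := by
              rw [Finset.sum_const, Finset.card_univ]
              simp [nsmul_eq_mul]
      have h2 : (0:ℝ) < 2 ^ k := by positivity
      exact le_of_mul_le_mul_left h1 h2
    have hk_le : (k:ℝ) ≤ b ^ (2:ℕ) * ((k:ℝ) ^ (1 - 2/p) * a ^ (2:ℕ)) := by
      calc (k:ℝ) = ∑ _i : Fin k, (1:ℝ) := by simp
        _ ≤ ∑ i, b ^ (2:ℕ) * BMaux.Fsq (y i) := Finset.sum_le_sum fun i _ => bound1 i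
        _ = b ^ (2:ℕ) * ∑ i, BMaux.Fsq (y i) := by rw [Finset.mul_sum]
        _ ≤ b ^ (2:ℕ) * ((k:ℝ) ^ (1 - 2/p) * a ^ (2:ℕ)) :=
            mul_le_mul_of_nonneg_left hsum (pow_nonneg hb0 2)
    -- conclude
    have hfinal : (k:ℝ) ^ (2/p) ≤ (a * b) ^ (2:ℕ) := by
      have hpow : (0:ℝ) < (k:ℝ) ^ (2/p - 1) := Real.rpow_pos_of_pos hk0 _
      have h1 := mul_le_mul_of_nonneg_right hk_le hpow.le
      have hL : (k:ℝ) * (k:ℝ) ^ (2/p - 1) = (k:ℝ) ^ (2/p) := by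
        nth_rewrite 1 [← Real.rpow_one (k:ℝ)]
        rw [← Real.rpow_add hk0]
        ring_nf
      have hR : b ^ (2:ℕ) * ((k:ℝ) ^ (1 - 2/p) * a ^ (2:ℕ)) * (k:ℝ) ^ (2/p - 1)
          = (a * b) ^ (2:ℕ) := by
        have : (k:ℝ) ^ (1 - 2/p) * (k:ℝ) ^ (2/p - 1) = 1 := by
          rw [← Real.rpow_add hk0]
          norm_num
        calc b ^ (2:ℕ) * ((k:ℝ) ^ (1 - 2/p) * a ^ (2:ℕ)) * (k:ℝ) ^ (2/p - 1)
            = (b ^ (2:ℕ) * a ^ (2:ℕ)) * ((k:ℝ) ^ (1 - 2/p) * (k:ℝ) ^ (2/p - 1)) := by ring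
          _ = (a * b) ^ (2:ℕ) := by rw [this, mul_one, mul_pow]; ring
      rw [hL, hR] at h1
      exact h1
    have hsqrt : (k:ℝ) ^ (1/p) ≤ a * b := by
      have h1 : Real.sqrt ((k:ℝ) ^ (2/p)) ≤ Real.sqrt ((a*b) ^ (2:ℕ)) :=
        Real.sqrt_le_sqrt hfinal
      rw [Real.sqrt_sq (mul_nonneg ha0 hb0)] at h1
      rw [show (k:ℝ) ^ (2/p) = ((k:ℝ) ^ (1/p)) ^ (2:ℕ) by
        rw [← Real.rpow_natCast ((k:ℝ) ^ (1/p)) 2, ← Real.rpow_mul hk0.le]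
        congr 1
        push_cast
        ring] at h1
      rwa [Real.sqrt_sq (Real.rpow_nonneg hk0.le _)] at h1
    exact hsqrt
  -- upper bound via the identity map
  have hub : opNormBetween Nop Nsch (LinearEquiv.refl ℂ V).toLinearMap *
      opNormBetween Nsch Nop (LinearEquiv.refl ℂ V).symm.toLinearMap ≤ (k:ℝ) ^ (1/p) := by
    have ha : opNormBetween Nop Nsch (LinearEquiv.refl ℂ V).toLinearMap ≤ (k:ℝ) ^ (1/p) := by
      refine BMaux.opNB_le (by positivity) fun v => ?_
      exact BMaux.schatten_le_opNorm hp0 v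
    have hb : opNormBetween Nsch Nop (LinearEquiv.refl ℂ V).symm.toLinearMap ≤ 1 := by
      refine BMaux.opNB_le zero_le_one fun v => ?_
      rw [one_mul]
      exact BMaux.opNorm_le_schatten hp0 v
    calc opNormBetween Nop Nsch (LinearEquiv.refl ℂ V).toLinearMap *
        opNormBetween Nsch Nop (LinearEquiv.refl ℂ V).symm.toLinearMap
        ≤ (k:ℝ) ^ (1/p) * 1 :=
          mul_le_mul ha hb BMaux.opNB_nonneg (by positivity)
      _ = (k:ℝ) ^ (1/p) := mul_one _
  refine le_antisymm ?_ (le_csInf hSne hlb)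
  calc sInf Sset ≤ _ := csInf_le ⟨0, fun t ht => ?_⟩ hid_mem
    _ ≤ (k:ℝ) ^ (1/p) := hub
  · obtain ⟨Γ, rfl⟩ := ht
    exact mul_nonneg BMaux.opNB_nonneg BMaux.opNB_nonneg
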